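/- Let ξ be a real random variable with E ξ = 0 and E ξ^2 < ∞, and define M(t) = E[ ξ·( 1{−ξ ≤ t ≤ 0} − 1{0 < t ≤ −ξ} ) ] for t ∈ ℝ. Then M(t) ≥ 0 for all t, and ∫_{−δ}^{δ} M(t) dt = E[ |ξ| · min(δ, |ξ|) ] for every δ > 0. -/

import Mathlib

open MeasureTheory

private lemma steinM_nonneg (x t : ℝ) :
    0 ≤ x * ((if -x ≤ t ∧ t ≤ 0 then (1 : ℝ) else 0) -
      (if 0 < t ∧ t ≤ -x then (1 : ℝ) else 0)) := by
  split_ifs with h1 h2 h2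
  · exact absurd (h1.2.trans_lt h2.1) (lt_irrefl t)
  · nlinarith [h1.1, h1.2]
  · nlinarith [h2.1, h2.2]
  · simp

private lemma steinM_abs_le (x t : ℝ) :
    |x * ((if -x ≤ t ∧ t ≤ 0 then (1 : ℝ) else 0) -
      (if 0 < t ∧ t ≤ -x then (1 : ℝ) else 0))| ≤ |x| := by
  rw [abs_mul]
  have h : |(if -x ≤ t ∧ t ≤ 0 then (1 : ℝ) else 0) -
      (if 0 < t ∧ t ≤ -x then (1 : ℝ) else 0)| ≤ 1 := by
    split_ifs <;> norm_num
  calc |x| * |_| ≤ |x| * 1 := mul_le_mul_of_nonneg_left h (abs_nonneg x)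
    _ = |x| := mul_one _

private lemma steinM_integral (δ x : ℝ) (hδ : 0 < δ) :
    ∫ t in Set.Ioc (-δ) δ, x * ((if -x ≤ t ∧ t ≤ 0 then (1 : ℝ) else 0) -
      (if 0 < t ∧ t ≤ -x then (1 : ℝ) else 0)) = |x| * min δ |x| := by
  rcases le_or_gt 0 x with hx0 | hx0
  · have hfe : (fun t : ℝ => x * ((if -x ≤ t ∧ t ≤ 0 then (1 : ℝ) else 0) -
        (if 0 < t ∧ t ≤ -x then (1 : ℝ) else 0)))
        = (Set.Icc (-x) 0).indicator (fun _ => x) := by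
      funext t
      rw [Set.indicator_apply]
      simp only [Set.mem_Icc]
      have h2 : ¬(0 < t ∧ t ≤ -x) := by rintro ⟨a, b⟩; linarith
      rw [if_neg h2]
      split_ifs <;> ring
    rw [hfe, setIntegral_indicator measurableSet_Icc, setIntegral_const]
    have hmax : -min δ x = max (-δ) (-x) := by
      rcases le_total δ x with h | h
      · rw [min_eq_left h, max_eq_left (neg_le_neg h)]
      · rw [min_eq_right h, max_eq_right (neg_le_neg h)]
    have hvol : volume (Set.Ioc (-δ) δ ∩ Set.Icc (-x) 0) = ENNReal.ofReal (min δ x) := by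
      apply le_antisymm
      · have hsub : Set.Ioc (-δ) δ ∩ Set.Icc (-x) 0 ⊆ Set.Icc (-min δ x) 0 := by
          rintro t ⟨⟨h1, h2⟩, h3, h4⟩
          refine ⟨?_, h4⟩
          rw [hmax]
          exact max_le h1.le h3
        calc volume (Set.Ioc (-δ) δ ∩ Set.Icc (-x) 0) ≤ volume (Set.Icc (-min δ x) 0) :=
              measure_mono hsub
          _ = ENNReal.ofReal (min δ x) := by
              rw [Real.volume_Icc, sub_neg_eq_add, zero_add]
      · have hsub2 : Set.Ioo (-min δ x) 0 ⊆ Set.Ioc (-δ) δ ∩ Set.Icc (-x) 0 := by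
          rintro t ⟨h1, h2⟩
          rw [hmax] at h1
          exact ⟨⟨lt_of_le_of_lt (le_max_left _ _) h1, by linarith⟩,
            le_of_lt (lt_of_le_of_lt (le_max_right _ _) h1), le_of_lt h2⟩
        calc ENNReal.ofReal (min δ x) = volume (Set.Ioo (-min δ x) 0) := by
              rw [Real.volume_Ioo, sub_neg_eq_add, zero_add]
          _ ≤ volume (Set.Ioc (-δ) δ ∩ Set.Icc (-x) 0) := measure_mono hsub2
    rw [measureReal_def, hvol, ENNReal.toReal_ofReal (le_min hδ.le hx0), abs_of_nonneg hx0, smul_eq_mul]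
    ring
  · have hfe : (fun t : ℝ => x * ((if -x ≤ t ∧ t ≤ 0 then (1 : ℝ) else 0) -
        (if 0 < t ∧ t ≤ -x then (1 : ℝ) else 0)))
        = (Set.Ioc 0 (-x)).indicator (fun _ => -x) := by
      funext t
      rw [Set.indicator_apply]
      simp only [Set.mem_Ioc]
      have h1 : ¬(-x ≤ t ∧ t ≤ 0) := by rintro ⟨a, b⟩; linarith
      rw [if_neg h1]
      split_ifs <;> ring
    rw [hfe, setIntegral_indicator measurableSet_Ioc, setIntegral_const]
    have hset : Set.Ioc (-δ) δ ∩ Set.Ioc 0 (-x) = Set.Ioc 0 (min δ (-x)) := by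
      ext t
      simp only [Set.mem_inter_iff, Set.mem_Ioc, le_min_iff]
      constructor
      · rintro ⟨⟨h1, h2⟩, h3, h4⟩; exact ⟨h3, h2, h4⟩
      · rintro ⟨h1, h2, h3⟩; exact ⟨⟨by linarith, h2⟩, h1, h3⟩
    rw [hset, measureReal_def, Real.volume_Ioc, sub_zero,
      ENNReal.toReal_ofReal (le_min hδ.le (by linarith)), abs_of_neg hx0, smul_eq_mul]
    ring

theorem stein_kernel_M {Ω : Type*} [MeasurableSpace Ω] (μ : Measure Ω)
    [IsProbabilityMeasure μ] (ξ : Ω → ℝ) (hmeas : Measurable ξ)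
    (hint : Integrable ξ μ) (hint2 : Integrable (fun ω => ξ ω ^ 2) μ)
    (hmean : ∫ ω, ξ ω ∂μ = 0)
    (M : ℝ → ℝ)
    (hM : ∀ t : ℝ, M t = ∫ ω, ξ ω *
        ((if -ξ ω ≤ t ∧ t ≤ 0 then (1 : ℝ) else 0) -
          (if 0 < t ∧ t ≤ -ξ ω then (1 : ℝ) else 0)) ∂μ) :
    (∀ t : ℝ, 0 ≤ M t) ∧
      ∀ δ : ℝ, 0 < δ → ∫ t in (-δ)..δ, M t = ∫ ω, |ξ ω| * min δ |ξ ω| ∂μ := by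
  refine ⟨fun t => ?_, fun δ hδ => ?_⟩
  · rw [hM]
    exact integral_nonneg fun ω => steinM_nonneg (ξ ω) t
  · have hle : (-δ) ≤ δ := by linarith
    rw [intervalIntegral.integral_of_le hle]
    haveI hfin : IsFiniteMeasure (volume.restrict (Set.Ioc (-δ) δ)) :=
      ⟨by rw [Measure.restrict_apply_univ, Real.volume_Ioc]; exact ENNReal.ofReal_lt_top⟩
    have hmeasF : Measurable (fun p : ℝ × Ω => ξ p.2 *
        ((if -ξ p.2 ≤ p.1 ∧ p.1 ≤ 0 then (1 : ℝ) else 0) -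
          (if 0 < p.1 ∧ p.1 ≤ -ξ p.2 then (1 : ℝ) else 0))) := by
      apply (hmeas.comp measurable_snd).mul
      apply Measurable.sub
      · exact Measurable.ite
          ((measurableSet_le (hmeas.comp measurable_snd).neg measurable_fst).inter
            (measurableSet_le measurable_fst measurable_const))
          measurable_const measurable_const
      · exact Measurable.ite
          ((measurableSet_lt measurable_const measurable_fst).inter
            (measurableSet_le measurable_fst (hmeas.comp measurable_snd).neg))
          measurable_const measurable_const
    have hdom : Integrable (fun p : ℝ × Ω => |ξ p.2|)
        ((volume.restrict (Set.Ioc (-δ) δ)).prod μ) := by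
      have hsm : AEStronglyMeasurable (fun p : ℝ × Ω => |ξ p.2|)
          ((volume.restrict (Set.Ioc (-δ) δ)).prod μ) :=
        (hmeas.comp measurable_snd).abs.aestronglyMeasurable
      rw [integrable_prod_iff hsm]
      exact ⟨Filter.Eventually.of_forall fun t => hint.abs,
        show Integrable (fun _ : ℝ => ∫ y : Ω, ‖|ξ y|‖ ∂μ)
            (volume.restrict (Set.Ioc (-δ) δ)) from integrable_const _⟩
    have hFint : Integrable (Function.uncurry fun t ω => ξ ω *
        ((if -ξ ω ≤ t ∧ t ≤ 0 then (1 : ℝ) else 0) -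
          (if 0 < t ∧ t ≤ -ξ ω then (1 : ℝ) else 0)))
        ((volume.restrict (Set.Ioc (-δ) δ)).prod μ) := by
      refine hdom.mono' hmeasF.aestronglyMeasurable
        (Filter.Eventually.of_forall fun p => ?_)
      simpa [Real.norm_eq_abs, Function.uncurry] using steinM_abs_le (ξ p.2) p.1
    calc ∫ t in Set.Ioc (-δ) δ, M t
        = ∫ t in Set.Ioc (-δ) δ, ∫ ω, ξ ω *
            ((if -ξ ω ≤ t ∧ t ≤ 0 then (1 : ℝ) else 0) -
              (if 0 < t ∧ t ≤ -ξ ω then (1 : ℝ) else 0)) ∂μ := by simp_rw [hM]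
      _ = ∫ ω, (∫ t in Set.Ioc (-δ) δ, ξ ω *
            ((if -ξ ω ≤ t ∧ t ≤ 0 then (1 : ℝ) else 0) -
              (if 0 < t ∧ t ≤ -ξ ω then (1 : ℝ) else 0))) ∂μ :=
          integral_integral_swap hFint
      _ = ∫ ω, |ξ ω| * min δ |ξ ω| ∂μ :=
          integral_congr_ae (Filter.Eventually.of_forall fun ω =>
            steinM_integral δ (ξ ω) hδ)
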